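/- arXiv:1207.0116 — 2 statements merged into one kernel-verified Lean document; each statement's English description precedes it below -/
import Mathlib

section
/- Let d ≥ 2 and κ ≥ 1 be coprime integers, and write d' = d if d is odd and d' = d/2 if d is even. For all integers n, m ≥ 0: π_{κ/d}(∏_{i=n+1}^{n+d'}(q^{2i} − 1)) − π_{κ/d}(∏_{i=m+1}^{m+d'}(q^{2i} − 1)) = 4κ(n−m)d'/d. -/
open Polynomial

/-- `argCount t f` is the cardinality of the multiset `Arg_t(f)` of real numbers `λ` with
`0 < λ ≤ 2πt` such that `e^{iλ}` is a (complex) root of the real polynomial `f`, each such `λ`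
counted with the multiplicity of `e^{iλ}` as a root of `f`. -/
noncomputable def argCount (t : ℝ) (f : Polynomial ℝ) : ℕ :=
  ((f.map (algebraMap ℝ ℂ)).roots.map fun ξ =>
    Nat.card {l : ℝ // 0 < l ∧ l ≤ 2 * Real.pi * t ∧ Complex.exp ((l : ℂ) * Complex.I) = ξ}).sum

/-- `piFn κ d f` is the rational number
`π_{κ/d}(f) = (a(f) + A(f))·(κ/d) + |Arg_{κ/d}(f)| + (1/2)·(multiplicity of 1 as a root of f)`,
where `a(f)` is the multiplicity of `0` as a root of `f` and `A(f)` is the degree of `f`. -/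
noncomputable def piFn (κ d : ℕ) (f : Polynomial ℝ) : ℚ :=
  ((rootMultiplicity 0 f : ℚ) + (f.natDegree : ℚ)) * (κ : ℚ) / (d : ℚ)
    + (argCount ((κ : ℝ) / (d : ℝ)) f : ℚ) + (rootMultiplicity 1 f : ℚ) / 2

lemma natCard_arg (u t : ℝ) :
    Nat.card {l : ℝ // 0 < l ∧ l ≤ 2 * Real.pi * t ∧
      Complex.exp ((l : ℂ) * Complex.I) = Complex.exp (((2 * Real.pi * u : ℝ) : ℂ) * Complex.I)} =
    (⌊t - u⌋ - ⌊-u⌋).toNat := by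
  have pi2 : (0:ℝ) < 2 * Real.pi := by positivity
  have key : ∀ n : ℤ, Complex.exp (((2 * Real.pi * (u + n) : ℝ) : ℂ) * Complex.I)
      = Complex.exp (((2 * Real.pi * u : ℝ) : ℂ) * Complex.I) := fun n => by
    rw [Complex.exp_eq_exp_iff_exists_int]; exact ⟨n, by push_cast; ring⟩
  have hmem : ∀ n : ℤ, n ∈ Finset.Ioc ⌊-u⌋ ⌊t - u⌋ ↔
      (0 < 2 * Real.pi * (u + n) ∧ 2 * Real.pi * (u + n) ≤ 2 * Real.pi * t) := by
    intro n
    rw [Finset.mem_Ioc, Int.floor_lt, Int.le_floor]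
    constructor
    · rintro ⟨h1, h2⟩
      constructor
      · nlinarith
      · nlinarith
    · rintro ⟨h1, h2⟩
      constructor
      · nlinarith
      · nlinarith
  have hbij : Function.Bijective (fun n : {n : ℤ // n ∈ Finset.Ioc ⌊-u⌋ ⌊t - u⌋} =>
      (⟨2 * Real.pi * (u + n.1), ((hmem n.1).mp n.2).1, ((hmem n.1).mp n.2).2, key n.1⟩ :
        {l : ℝ // 0 < l ∧ l ≤ 2 * Real.pi * t ∧
          Complex.exp ((l : ℂ) * Complex.I) =
            Complex.exp (((2 * Real.pi * u : ℝ) : ℂ) * Complex.I)})) := by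
    constructor
    · rintro ⟨a, ha⟩ ⟨b, hb⟩ hab
      simp only [Subtype.mk.injEq] at hab ⊢
      have h3 : u + (a:ℝ) = u + (b:ℝ) := mul_left_cancel₀ pi2.ne' hab
      have : (a:ℝ) = (b:ℝ) := by linarith
      exact_mod_cast this
    · rintro ⟨l, hl0, hl1, hl2⟩
      rw [Complex.exp_eq_exp_iff_exists_int] at hl2
      obtain ⟨n, hn⟩ := hl2
      have hln : l = 2 * Real.pi * (u + n) := by
        have h2 : (l:ℂ) = ((2 * Real.pi * (u + n) : ℝ) : ℂ) := by
          apply mul_right_cancel₀ Complex.I_ne_zero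
          rw [hn]; push_cast; ring
        exact_mod_cast h2
      refine ⟨⟨n, (hmem n).mpr ⟨?_, ?_⟩⟩, ?_⟩
      · rw [← hln]; exact hl0
      · rw [← hln]; exact hl1
      · exact Subtype.ext hln.symm
  rw [← Nat.card_congr (Equiv.ofBijective _ hbij), Nat.card_eq_finsetCard, Int.card_Ioc]

lemma hermite_sum (N d : ℕ) (hN : 0 < N) (hd : 0 < d) (A : ℤ) :
    ∑ k ∈ Finset.range N, (A + (k : ℤ) * d) / ((N : ℤ) * d) = A / d := by
  have hNd : (0:ℤ) < (N:ℤ) * d := by positivity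
  set H : ℤ → ℤ := fun B => ∑ k ∈ Finset.range N, (B + (k:ℤ) * d) / ((N:ℤ) * d) with hH
  have step : ∀ B : ℤ, H (B + d) = H B + 1 := by
    intro B
    set g : ℕ → ℤ := fun k => (B + (k:ℤ) * d) / ((N:ℤ) * d) with hg
    have hgN : g N = B / ((N:ℤ) * d) + 1 := by
      simp only [hg]
      rw [show B + (N:ℤ) * d = B + 1 * ((N:ℤ) * d) by ring,
        Int.add_mul_ediv_right _ _ hNd.ne']
    have hg0 : g 0 = B / ((N:ℤ) * d) := by simp [hg]
    have h1 : H (B + d) = ∑ k ∈ Finset.range N, g (k + 1) := by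
      simp only [hH, hg]
      exact Finset.sum_congr rfl fun k _ => by push_cast; ring_nf
    have h2 : ∑ k ∈ Finset.range N, g (k + 1) = ∑ k ∈ Finset.range (N + 1), g k - g 0 := by
      rw [Finset.sum_range_succ']; ring
    rw [h1, h2, Finset.sum_range_succ, hgN, hg0]
    simp only [hH, hg]
    ring
  have base : ∀ r : ℤ, 0 ≤ r → r < d → H r = 0 := by
    intro r h0 h1
    apply Finset.sum_eq_zero
    intro k hk
    have hkN : (k:ℤ) < (N:ℤ) := by exact_mod_cast Finset.mem_range.mp hk
    have hd' : (0:ℤ) < (d:ℤ) := by exact_mod_cast hd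
    apply Int.ediv_eq_zero_of_lt
    · have : (0:ℤ) ≤ (k:ℤ) * d := by positivity
      linarith
    · nlinarith
  have key : ∀ q : ℤ, ∀ r : ℤ, 0 ≤ r → r < d → H (r + q * d) = q := by
    intro q
    induction q using Int.induction_on with
    | zero => intro r h0 h1; simpa using base r h0 h1
    | succ q ih =>
        intro r h0 h1
        rw [show r + ((q:ℤ)+1)*d = (r + q*d) + d by ring, step, ih r h0 h1]
    | pred q ih =>
        intro r h0 h1
        have h2 := step (r + (-(q:ℤ)-1)*d)
        rw [show r + (-(q:ℤ)-1)*d + d = r + (-(q:ℤ))*d by ring, ih r h0 h1] at h2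
        omega
  have hd' : (0:ℤ) < (d:ℤ) := by exact_mod_cast hd
  have := key (A / d) (A % d) (Int.emod_nonneg A hd'.ne') (Int.emod_lt_of_pos A hd')
  rwa [Int.emod_add_ediv_mul A d] at this

lemma neg_div_nat {k N : ℕ} (h0 : 0 < k) (h1 : k < N) : (-(k:ℤ)) / (N:ℤ) = -1 := by
  have hN : ((N:ℤ)) ≠ 0 := Int.natCast_ne_zero.mpr (by omega)
  have h2 := Int.add_mul_ediv_right (-(k:ℤ)) 1 hN
  have h3 : (-(k:ℤ) + 1 * N) / N = 0 := Int.ediv_eq_zero_of_lt (by omega) (by omega)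
  omega

lemma argCount_X_pow_sub_one (N κ d : ℕ) (hN : 0 < N) (hd : 0 < d) :
    argCount ((κ : ℝ) / (d : ℝ)) ((X : Polynomial ℝ) ^ N - 1) = N * κ / d := by
  have hdZ : (0:ℤ) < (d:ℤ) := by exact_mod_cast hd
  have hNZ : (0:ℤ) < (N:ℤ) := by exact_mod_cast hN
  have hNR : (0:ℝ) < (N:ℝ) := by exact_mod_cast hN
  have hdR : (0:ℝ) < (d:ℝ) := by exact_mod_cast hd
  have hζ := Complex.isPrimitiveRoot_exp N hN.ne'
  have hmap : ((X : Polynomial ℝ) ^ N - 1).map (algebraMap ℝ ℂ) = X ^ N - C 1 := by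
    simp [Polynomial.map_sub, Polynomial.map_pow]
  have hroots : (((X : Polynomial ℝ) ^ N - 1).map (algebraMap ℝ ℂ)).roots
      = (Multiset.range N).map
          (fun k => Complex.exp (2 * Real.pi * Complex.I / N) ^ k * 1) := by
    rw [hmap]
    have h0 : ((X : Polynomial ℂ) ^ N - C 1).roots = Polynomial.nthRoots N (1:ℂ) := rfl
    rw [h0, hζ.nthRoots_eq (one_pow N)]
  set c : ℕ → ℤ := fun k =>
    ((κ:ℤ) * N - k * d) / ((d:ℤ) * N) - (-(k:ℤ)) / (N:ℤ) with hc
  have hterm : ∀ k : ℕ, (Complex.exp (2 * Real.pi * Complex.I / N) ^ k * 1)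
      = Complex.exp (((2 * Real.pi * ((k:ℝ)/N) : ℝ) : ℂ) * Complex.I) := by
    intro k
    rw [mul_one, ← Complex.exp_nat_mul]
    congr 1
    push_cast
    ring
  have hcard : ∀ k : ℕ,
      Nat.card {l : ℝ // 0 < l ∧ l ≤ 2 * Real.pi * ((κ:ℝ)/(d:ℝ)) ∧
        Complex.exp ((l : ℂ) * Complex.I)
          = Complex.exp (2 * Real.pi * Complex.I / N) ^ k * 1} = (c k).toNat := by
    intro k
    rw [hterm k, natCard_arg ((k:ℝ)/(N:ℝ)) ((κ:ℝ)/(d:ℝ))]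
    congr 2
    · have h1 : (κ:ℝ)/(d:ℝ) - (k:ℝ)/(N:ℝ)
          = ((((κ:ℤ) * N - k * d : ℤ) : ℚ) / ((d * N : ℕ) : ℚ) : ℚ) := by
        push_cast
        field_simp
      rw [h1, Rat.floor_cast, Rat.floor_intCast_div_natCast]
      norm_cast
    · have h2 : -((k:ℝ)/(N:ℝ)) = (((-(k:ℤ) : ℤ) : ℚ) / ((N : ℕ) : ℚ) : ℚ) := by
        push_cast
        ring
      rw [h2, Rat.floor_cast, Rat.floor_intCast_div_natCast]
  have hsum : argCount ((κ : ℝ) / (d : ℝ)) ((X : Polynomial ℝ) ^ N - 1)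
      = ∑ k ∈ Finset.range N, (c k).toNat := by
    unfold argCount
    rw [hroots, Multiset.map_map]
    have : ((Multiset.range N).map
        (fun k => (c k).toNat)).sum = ∑ k ∈ Finset.range N, (c k).toNat := by
      rw [← Finset.range_val]
      rfl
    rw [← this]
    congr 1
    exact Multiset.map_congr rfl fun k _ => hcard k
  have hpos : ∀ k ∈ Finset.range N, 0 ≤ c k := by
    intro k hk
    have hkN : (k:ℤ) < (N:ℤ) := by exact_mod_cast Finset.mem_range.mp hk
    rcases Nat.eq_zero_or_pos k with rfl | hk0
    · simp only [hc, Nat.cast_zero, zero_mul, sub_zero, neg_zero, Int.zero_ediv, sub_zero]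
      exact Int.ediv_nonneg (by positivity) (by positivity)
    · have h1 : (-(k:ℤ)) / (N:ℤ) = -1 := neg_div_nat hk0 (Finset.mem_range.mp hk)
      have h2 : (-1 : ℤ) ≤ ((κ:ℤ) * N - k * d) / ((d:ℤ) * N) := by
        rw [Int.le_ediv_iff_mul_le (by positivity)]
        nlinarith
      simp only [hc]
      rw [h1]
      linarith
  obtain ⟨N', rfl⟩ : ∃ N', N = N' + 1 := ⟨N - 1, by omega⟩
  have hsumb : ∑ k ∈ Finset.range (N'+1), ((κ:ℤ) * (N'+1) - k * d) / ((d:ℤ) * (N'+1))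
      = ((κ:ℤ) * (N'+1)) / d - N' := by
    rw [← Finset.sum_range_reflect]
    have hcong : ∀ k ∈ Finset.range (N'+1),
        ((κ:ℤ) * (N'+1) - ((N' + 1 - 1 - k : ℕ):ℤ) * d) / ((d:ℤ) * (N'+1))
          = (((κ:ℤ) * (N'+1) - (N':ℤ) * d) + (k:ℤ) * d) / (((N'+1 : ℕ):ℤ) * d) := by
      intro k hk
      have hk' : k ≤ N' := by have := Finset.mem_range.mp hk; omega
      have : ((N' + 1 - 1 - k : ℕ):ℤ) = (N':ℤ) - k := by push_cast [Nat.sub_sub]; omega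
      rw [this]
      congr 1
      · ring
      · push_cast; ring
    rw [Finset.sum_congr rfl hcong, hermite_sum (N'+1) d (by omega) hd]
    rw [show (κ:ℤ) * (N'+1) - (N':ℤ) * d = (κ:ℤ) * (N'+1) + (-(N':ℤ)) * d by ring,
      Int.add_mul_ediv_right _ _ hdZ.ne']
    ring
  have hsumc : ∑ k ∈ Finset.range (N'+1), (-(k:ℤ)) / ((N'+1 : ℕ):ℤ) = -(N':ℤ) := by
    rw [Finset.sum_range_succ']
    have h0 : (-(0:ℕ):ℤ) / ((N'+1 : ℕ):ℤ) = 0 := by simp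
    rw [h0, add_zero]
    have : ∀ k ∈ Finset.range N', (-((k+1:ℕ)):ℤ) / ((N'+1 : ℕ):ℤ) = -1 := by
      intro k hk
      exact neg_div_nat (by omega) (by have := Finset.mem_range.mp hk; omega)
    rw [Finset.sum_congr rfl this]
    simp
  have hZ : ((∑ k ∈ Finset.range (N'+1), (c k).toNat : ℕ) : ℤ)
      = ((κ:ℤ) * (N'+1)) / d := by
    push_cast
    rw [Finset.sum_congr rfl fun k hk => Int.toNat_of_nonneg (hpos k hk)]
    simp only [hc]
    rw [Finset.sum_sub_distrib]
    push_cast at hsumb hsumc ⊢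
    rw [hsumb, hsumc]
    ring
  rw [hsum]
  have h9 : (((N'+1) * κ / d : ℕ) : ℤ) = ((κ:ℤ) * (N'+1)) / d := by
    rw [Int.natCast_div]
    push_cast
    ring_nf
  omega

lemma sum_Ioc_shift {M : Type*} [AddCommMonoid M] (f : ℕ → M) (n k : ℕ) :
    ∑ i ∈ Finset.Ioc n (n + k), f i = ∑ j ∈ Finset.range k, f (n + 1 + j) := by
  rw [← Finset.Ico_add_one_add_one_eq_Ioc, Finset.sum_Ico_eq_sum_range]
  have h : n + k + 1 - (n + 1) = k := by omega
  rw [h]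

lemma rm_one_X_pow_sub_one (k : ℕ) (hk : 0 < k) :
    rootMultiplicity (1:ℝ) ((X : Polynomial ℝ) ^ k - 1) = 1 := by
  have hgeom := geom_sum_mul (X : Polynomial ℝ) k
  have hne : (∑ i ∈ Finset.range k, (X : Polynomial ℝ) ^ i) * (X - 1) ≠ 0 := by
    rw [hgeom]
    have := Polynomial.monic_X_pow_sub_C (1:ℝ) hk.ne'
    rw [Polynomial.C_1] at this
    exact this.ne_zero
  rw [← hgeom, Polynomial.rootMultiplicity_mul hne]
  have h1 : rootMultiplicity (1:ℝ) (X - 1 : Polynomial ℝ) = 1 := by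
    rw [show (1 : Polynomial ℝ) = C 1 from Polynomial.C_1.symm]
    exact Polynomial.rootMultiplicity_X_sub_C_self
  have h2 : rootMultiplicity (1:ℝ) (∑ i ∈ Finset.range k, (X : Polynomial ℝ) ^ i) = 0 := by
    apply Polynomial.rootMultiplicity_eq_zero
    simp only [Polynomial.IsRoot, Polynomial.eval_finset_sum, Polynomial.eval_pow,
      Polynomial.eval_X, one_pow, Finset.sum_const, Finset.card_range, nsmul_eq_mul, mul_one]
    exact_mod_cast hk.ne'
  rw [h1, h2]

lemma argCount_prod (t : ℝ) (s : Finset ℕ) (f : ℕ → Polynomial ℝ) (h : ∀ i ∈ s, f i ≠ 0) :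
    argCount t (∏ i ∈ s, f i) = ∑ i ∈ s, argCount t (f i) := by
  unfold argCount
  rw [Polynomial.map_prod, Polynomial.roots_prod _ _
    (Finset.prod_ne_zero_iff.mpr fun i hi => Polynomial.map_ne_zero (h i hi)),
    Multiset.map_bind, Multiset.sum_bind]
  rfl

lemma piFn_prod (κ d d' n : ℕ) (hd : 0 < d) :
    piFn κ d (∏ i ∈ Finset.Ioc n (n + d'), (X ^ (2 * i) - 1)) =
      ((∑ i ∈ Finset.Ioc n (n + d'), 2 * i : ℕ) : ℚ) * κ / d
        + ((∑ i ∈ Finset.Ioc n (n + d'), 2 * i * κ / d : ℕ) : ℚ) + (d' : ℚ) / 2 := by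
  have hfac : ∀ i ∈ Finset.Ioc n (n + d'), (X ^ (2 * i) - 1 : Polynomial ℝ) ≠ 0 := by
    intro i hi
    have h2i : 2 * i ≠ 0 := by have := (Finset.mem_Ioc.mp hi).1; omega
    have := Polynomial.monic_X_pow_sub_C (1:ℝ) h2i
    rw [Polynomial.C_1] at this
    exact this.ne_zero
  have hprodne : (∏ i ∈ Finset.Ioc n (n + d'), (X ^ (2 * i) - 1 : Polynomial ℝ)) ≠ 0 :=
    Finset.prod_ne_zero_iff.mpr hfac
  have h0 : rootMultiplicity (0:ℝ) (∏ i ∈ Finset.Ioc n (n + d'), (X ^ (2 * i) - 1)) = 0 := by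
    apply Polynomial.rootMultiplicity_eq_zero
    simp only [Polynomial.IsRoot, Polynomial.eval_prod]
    rw [Finset.prod_eq_zero_iff]
    rintro ⟨i, hi, hz⟩
    have h2i : 2 * i ≠ 0 := by have := (Finset.mem_Ioc.mp hi).1; omega
    simp [Polynomial.eval_pow, zero_pow h2i] at hz
  have hdeg : (∏ i ∈ Finset.Ioc n (n + d'), (X ^ (2 * i) - 1 : Polynomial ℝ)).natDegree
      = ∑ i ∈ Finset.Ioc n (n + d'), 2 * i := by
    rw [Polynomial.natDegree_prod _ _ hfac]
    refine Finset.sum_congr rfl fun i hi => ?_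
    rw [show (1 : Polynomial ℝ) = C 1 from Polynomial.C_1.symm, Polynomial.natDegree_X_pow_sub_C]
  have h1 : rootMultiplicity (1:ℝ) (∏ i ∈ Finset.Ioc n (n + d'), (X ^ (2 * i) - 1)) = d' := by
    rw [← Polynomial.count_roots, Polynomial.roots_prod _ _ hprodne, Multiset.count_bind]
    have hcong : ∀ i ∈ (Finset.Ioc n (n + d')).val,
        Multiset.count 1 ((X ^ (2*i) - 1 : Polynomial ℝ)).roots = 1 := by
      intro i hi
      rw [Polynomial.count_roots, rm_one_X_pow_sub_one (2*i)
        (by have := (Finset.mem_Ioc.mp (Finset.mem_val.mp hi)).1; omega)]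
    rw [Multiset.map_congr rfl hcong, Multiset.map_const', Multiset.sum_replicate, smul_eq_mul,
      mul_one]
    rw [show Multiset.card (Finset.Ioc n (n + d')).val = (Finset.Ioc n (n + d')).card from rfl,
      Nat.card_Ioc]
    omega
  have harg : argCount ((κ:ℝ)/(d:ℝ)) (∏ i ∈ Finset.Ioc n (n + d'), (X ^ (2 * i) - 1))
      = ∑ i ∈ Finset.Ioc n (n + d'), 2 * i * κ / d := by
    rw [argCount_prod _ _ _ hfac]
    refine Finset.sum_congr rfl fun i hi => ?_
    exact argCount_X_pow_sub_one (2*i) κ d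
      (by have := (Finset.mem_Ioc.mp hi).1; omega) hd
  unfold piFn
  rw [h0, hdeg, h1, harg]
  push_cast
  ring

lemma D_shift (d' n : ℕ) : (∑ i ∈ Finset.Ioc n (n + d'), 2 * i)
    = (∑ i ∈ Finset.Ioc 0 (0 + d'), 2 * i) + 2 * d' * n := by
  rw [sum_Ioc_shift (fun i => 2 * i) n d', sum_Ioc_shift (fun i => 2 * i) 0 d']
  have : ∀ j ∈ Finset.range d', 2 * (n + 1 + j) = 2 * (0 + 1 + j) + 2 * n := by
    intro j _; ring
  rw [Finset.sum_congr rfl this, Finset.sum_add_distrib, Finset.sum_const, Finset.card_range,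
    smul_eq_mul]
  ring

lemma S_shift (κ d d' : ℕ) (hdvd : d ∣ 2 * d' * κ) (n : ℕ) :
    (∑ i ∈ Finset.Ioc n (n + d'), 2 * i * κ / d)
      = (∑ i ∈ Finset.Ioc 0 (0 + d'), 2 * i * κ / d) + n * (2 * d' * κ / d) := by
  have hstep : ∀ i : ℕ, 2 * (i + d') * κ / d = 2 * i * κ / d + 2 * d' * κ / d := by
    intro i
    rw [show 2 * (i + d') * κ = 2 * i * κ + 2 * d' * κ by ring,
      Nat.add_div_of_dvd_left hdvd]
  set g : ℕ → ℕ := fun i => 2 * i * κ / d with hg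
  set S : ℕ → ℕ := fun n => ∑ i ∈ Finset.Ioc n (n + d'), g i with hS
  have hSsucc : ∀ m : ℕ, S (m + 1) = S m + 2 * d' * κ / d := by
    intro m
    have e1 : S (m + 1) + g (m + 1) = S m + g (m + 1 + d') := by
      simp only [hS]
      rw [sum_Ioc_shift g (m+1) d', sum_Ioc_shift g m d',
        ← Finset.sum_range_succ (fun j => g (m + 1 + j)) d',
        Finset.sum_range_succ' (fun j => g (m + 1 + j)) d']
      exact congrArg₂ (· + ·)
        (Finset.sum_congr rfl fun j _ => by congr 1; omega) rfl
    have e2 : g (m + 1 + d') = g (m + 1) + 2 * d' * κ / d := hstep (m + 1)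
    omega
  have hSn : ∀ m : ℕ, S m = S 0 + m * (2 * d' * κ / d) := by
    intro m
    induction m with
    | zero => simp
    | succ p ih => rw [hSsucc p, ih]; ring
  exact hSn n

/-- Proposition 8.5: with `d' = d` if `d` is odd and `d' = d/2` if `d` is even, for all
`n, m ≥ 0`:
`π_{κ/d}(∏_{i=n+1}^{n+d'}(q^{2i} − 1)) − π_{κ/d}(∏_{i=m+1}^{m+d'}(q^{2i} − 1)) = 4κ(n−m)d'/d`. -/
theorem piFn_prod_diff_orthog (κ d : ℕ) (hd : 2 ≤ d) (hκ : 1 ≤ κ) (hcop : Nat.Coprime κ d)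
    (d' : ℕ) (hd' : (Odd d ∧ d' = d) ∨ (Even d ∧ 2 * d' = d)) (n m : ℕ) :
    piFn κ d (∏ i ∈ Finset.Ioc n (n + d'), (X ^ (2 * i) - 1)) -
        piFn κ d (∏ i ∈ Finset.Ioc m (m + d'), (X ^ (2 * i) - 1)) =
      4 * (κ : ℚ) * ((n : ℚ) - (m : ℚ)) * (d' : ℚ) / (d : ℚ) := by
  have hd0 : 0 < d := by omega
  have hdvd : d ∣ 2 * d' * κ := by
    rcases hd' with ⟨h, rfl⟩ | ⟨h, h2⟩
    · exact Dvd.dvd.mul_right ⟨2, by ring⟩ κ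
    · exact Dvd.dvd.mul_right ⟨1, by omega⟩ κ
  have hdQ : ((d:ℚ)) ≠ 0 := by positivity
  have hc : ((2 * d' * κ / d : ℕ) : ℚ) = 2 * (d':ℚ) * κ / d := by
    rw [Nat.cast_div hdvd hdQ]
    push_cast
    ring
  rw [piFn_prod κ d d' n hd0, piFn_prod κ d d' m hd0, D_shift d' n, D_shift d' m,
    S_shift κ d d' hdvd n, S_shift κ d d' hdvd m]
  push_cast [hc]
  field_simp
  ring
end

section
/- Let d ≥ 2 be an even integer and κ ≥ 1 an integer coprime to d (hence κ is odd), write d' = d/2, let i, j ≥ 0 be integers, and write κ(j−i) = ad + b − d/2 with integers a and b satisfying 0 ≤ b < d. Then: if i − j > 0, then π_{κ/d}(q^{i+d'} − q^j) − π_{κ/d}(q^i + q^j) = κ; if 0 < j − i < d', then this difference equals κ − 2a + 1 when b = 0 and κ − 2a when b ≠ 0; and if j − i > d', then this difference equals 0. -/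
open Polynomial

lemma card_exp_pow (n : ℕ) (hn : 0 < n) (t β : ℝ) (hβ0 : 0 < β) (hβ2 : β ≤ 2 * Real.pi) :
    Finite {l : ℝ // 0 < l ∧ l ≤ 2 * Real.pi * t ∧
        Complex.exp ((l : ℂ) * Complex.I) ^ n = Complex.exp ((β : ℝ) * Complex.I)} ∧
      Nat.card {l : ℝ // 0 < l ∧ l ≤ 2 * Real.pi * t ∧
        Complex.exp ((l : ℂ) * Complex.I) ^ n = Complex.exp ((β : ℝ) * Complex.I)} =
      ⌊t * n - β / (2 * Real.pi) + 1⌋₊ := by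
  have hπ : (0 : ℝ) < 2 * Real.pi := by positivity
  have hn' : (0 : ℝ) < n := by exact_mod_cast hn
  set N := ⌊t * n - β / (2 * Real.pi) + 1⌋₊ with hN
  set U := {l : ℝ // 0 < l ∧ l ≤ 2 * Real.pi * t ∧
      Complex.exp ((l : ℂ) * Complex.I) ^ n = Complex.exp ((β : ℝ) * Complex.I)} with hU
  have key : ∀ l : ℝ, Complex.exp ((l : ℂ) * Complex.I) ^ n
      = Complex.exp (((n * l : ℝ) : ℂ) * Complex.I) := by
    intro l
    rw [← Complex.exp_nat_mul]
    push_cast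
    ring_nf
  have hFd : ∀ m : ℕ, m ∈ Finset.range N → ((β + 2 * Real.pi * m) / n : ℝ) ∈
      {l : ℝ | 0 < l ∧ l ≤ 2 * Real.pi * t ∧
        Complex.exp ((l : ℂ) * Complex.I) ^ n = Complex.exp ((β : ℝ) * Complex.I)} := by
    intro m hm
    refine ⟨?_, ?_, ?_⟩
    · apply div_pos (by positivity) hn'
    · rw [Finset.mem_range] at hm
      have h1 : ((m + 1 : ℕ) : ℝ) ≤ t * n - β / (2 * Real.pi) + 1 :=
        (Nat.le_floor_iff' (by omega)).1 (by omega)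
      push_cast at h1
      have h2 : (m : ℝ) ≤ t * n - β / (2 * Real.pi) := by linarith
      have h3 : β / (2 * Real.pi) * (2 * Real.pi) = β := div_mul_cancel₀ _ (ne_of_gt hπ)
      rw [div_le_iff₀ hn']
      nlinarith
    · rw [key]
      have : ((n * ((β + 2 * Real.pi * m) / n) : ℝ) : ℂ) * Complex.I
          = (β : ℂ) * Complex.I + (m : ℤ) * (2 * Real.pi * Complex.I) := by
        have : (n : ℝ) * ((β + 2 * Real.pi * m) / n) = β + 2 * Real.pi * m := by
          field_simp
        rw [this]; push_cast; ring
      rw [this, Complex.exp_add, Complex.exp_int_mul_two_pi_mul_I, mul_one]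
  set F : {m : ℕ // m ∈ Finset.range N} → U :=
    fun m => ⟨(β + 2 * Real.pi * m.1) / n, hFd m.1 m.2⟩ with hF
  have hbij : Function.Bijective F := by
    constructor
    · rintro ⟨m1, h1⟩ ⟨m2, h2⟩ h
      have hv : ((β + 2 * Real.pi * m1) / n : ℝ) = (β + 2 * Real.pi * m2) / n :=
        congrArg Subtype.val h
      rw [div_eq_div_iff (ne_of_gt hn') (ne_of_gt hn')] at hv
      have hm12 : (m1 : ℝ) = m2 := by
        have hπ' : (2 * Real.pi : ℝ) ≠ 0 := ne_of_gt hπ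
        have : 2 * Real.pi * (m1 : ℝ) = 2 * Real.pi * m2 := by nlinarith
        exact mul_left_cancel₀ hπ' this
      have hm : m1 = m2 := by exact_mod_cast hm12
      subst hm; rfl
    · rintro ⟨l, hl1, hl2, hl3⟩
      rw [key] at hl3
      rw [Complex.exp_eq_exp_iff_exists_int] at hl3
      obtain ⟨m, hm⟩ := hl3
      have hre : (n : ℝ) * l = β + m * (2 * Real.pi) := by
        have h0 : (((n * l - β - m * (2 * Real.pi) : ℝ)) : ℂ) * Complex.I = 0 := by
          push_cast at hm ⊢
          linear_combination hm
        rw [mul_eq_zero] at h0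
        rcases h0 with h0 | h0
        · rw [Complex.ofReal_eq_zero] at h0
          linarith
        · exact absurd h0 Complex.I_ne_zero
      have hm0 : 0 ≤ m := by
        by_contra hneg
        push_neg at hneg
        have : (m : ℝ) ≤ -1 := by exact_mod_cast (by omega : m ≤ -1)
        nlinarith [Real.pi_pos]
      lift m to ℕ using hm0 with m'
      have hmN : m' ∈ Finset.range N := by
        rw [Finset.mem_range]
        have h2 : (m' : ℝ) ≤ t * n - β / (2 * Real.pi) := by
          have hl2' : (n : ℝ) * l ≤ 2 * Real.pi * t * n :=
            mul_le_mul_of_nonneg_left hl2 (le_of_lt hn') |>.trans_eq (by ring)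
          have h3 : β / (2 * Real.pi) * (2 * Real.pi) = β := div_mul_cancel₀ _ (ne_of_gt hπ)
          have : (m' : ℝ) * (2 * Real.pi) ≤ (t * n - β / (2 * Real.pi)) * (2 * Real.pi) := by
            push_cast at hre ⊢
            nlinarith
          exact le_of_mul_le_mul_right this hπ
        have : ((m' + 1 : ℕ) : ℝ) ≤ t * n - β / (2 * Real.pi) + 1 := by push_cast; linarith
        exact Nat.lt_of_add_one_le (Nat.le_floor this)
      refine ⟨⟨m', hmN⟩, Subtype.ext ?_⟩
      show (β + 2 * Real.pi * m') / n = l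
      rw [div_eq_iff (ne_of_gt hn')]
      push_cast at hre
      linarith
  have hfin : Finite U := Finite.of_surjective F hbij.2
  refine ⟨hfin, ?_⟩
  rw [← Nat.card_eq_of_bijective F hbij, Nat.card_eq_fintype_card, Fintype.card_coe,
    Finset.card_range]

lemma argCount_eq_card (t : ℝ) (n : ℕ) (hn : 0 < n) (f : ℝ[X]) (c : ℂ) (hc : c ≠ 0)
    (hf : f.map (algebraMap ℝ ℂ) = X ^ n - C c)
    (hfin : Finite {l : ℝ // 0 < l ∧ l ≤ 2 * Real.pi * t ∧
      Complex.exp ((l : ℂ) * Complex.I) ^ n = c}) :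
    argCount t f = Nat.card {l : ℝ // 0 < l ∧ l ≤ 2 * Real.pi * t ∧
      Complex.exp ((l : ℂ) * Complex.I) ^ n = c} := by
  classical
  set count : ℂ → ℕ := fun ξ =>
    Nat.card {l : ℝ // 0 < l ∧ l ≤ 2 * Real.pi * t ∧ Complex.exp ((l : ℂ) * Complex.I) = ξ}
    with hcount
  have hp0 : (X ^ n - C c : ℂ[X]) ≠ 0 := X_pow_sub_C_ne_zero hn c
  have hsep : (X ^ n - C c : ℂ[X]).Separable :=
    separable_X_pow_sub_C c (Nat.cast_ne_zero.mpr hn.ne') hc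
  have hnd : (X ^ n - C c : ℂ[X]).roots.Nodup := nodup_roots hsep
  set R : Finset ℂ := ⟨(X ^ n - C c : ℂ[X]).roots, hnd⟩ with hR
  have hRmem : ∀ ξ : ℂ, ξ ∈ R ↔ ξ ^ n = c := by
    intro ξ
    rw [hR, Finset.mem_mk, mem_roots hp0]
    simp [IsRoot, sub_eq_zero]
  set U := {l : ℝ // 0 < l ∧ l ≤ 2 * Real.pi * t ∧
      Complex.exp ((l : ℂ) * Complex.I) ^ n = c} with hUdef
  set g : U → ℂ := fun u => Complex.exp ((u.1 : ℂ) * Complex.I) with hg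
  have hgR : ∀ u : U, g u ∈ R := fun u => (hRmem _).2 u.2.2.2
  have step1 : argCount t f = ∑ ξ ∈ R, count ξ := by
    unfold argCount
    rw [hf, Finset.sum]
  have fibeq : ∀ ξ : {x // x ∈ R}, Nat.card {u : U // g u = ↑ξ} = count ξ.1 := by
    intro ⟨ξ, hξ⟩
    have hξc : ξ ^ n = c := (hRmem ξ).1 hξ
    have e1 := Equiv.subtypeSubtypeEquivSubtypeInter
      (fun l : ℝ => 0 < l ∧ l ≤ 2 * Real.pi * t ∧ Complex.exp ((l : ℂ) * Complex.I) ^ n = c)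
      (fun l : ℝ => Complex.exp ((l : ℂ) * Complex.I) = ξ)
    have e2 := Equiv.subtypeEquivRight (p := fun l : ℝ =>
        (0 < l ∧ l ≤ 2 * Real.pi * t ∧ Complex.exp ((l : ℂ) * Complex.I) ^ n = c) ∧
          Complex.exp ((l : ℂ) * Complex.I) = ξ)
      (q := fun l : ℝ => 0 < l ∧ l ≤ 2 * Real.pi * t ∧ Complex.exp ((l : ℂ) * Complex.I) = ξ)
      (fun l => ⟨fun h => ⟨h.1.1, h.1.2.1, h.2⟩,
        fun h => ⟨⟨h.1, h.2.1, by rw [h.2.2, hξc]⟩, h.2.2⟩⟩)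
    exact Nat.card_congr (e1.trans e2)
  have E := Equiv.sigmaSubtypeFiberEquiv g (· ∈ R) hgR
  haveI : Finite U := hfin
  haveI : Finite ((ξ : {x // x ∈ R}) × {u : U // g u = ↑ξ}) := Finite.of_equiv _ E.symm
  letI : Fintype {x // x ∈ R} := FinsetCoe.fintype R
  letI : ∀ ξ : {x // x ∈ R}, Fintype {u : U // g u = ↑ξ} := fun ξ => Fintype.ofFinite _
  have step2 : Nat.card U = ∑ ξ ∈ R, count ξ := by
    rw [← Nat.card_congr E, Nat.card_eq_fintype_card, Fintype.card_sigma,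
      ← Finset.sum_coe_sort R count]
    exact Finset.sum_congr rfl fun ξ _ => by rw [← fibeq ξ, Nat.card_eq_fintype_card]
  rw [step1, ← step2]

lemma argCount_sub_one (t : ℝ) (n : ℕ) (hn : 0 < n) :
    argCount t (X ^ n - 1 : ℝ[X]) = ⌊t * n⌋₊ := by
  have hπ : (0 : ℝ) < 2 * Real.pi := by positivity
  have hβ : Complex.exp (((2 * Real.pi : ℝ) : ℂ) * Complex.I) = 1 := by
    push_cast
    exact Complex.exp_two_pi_mul_I
  obtain ⟨hfin, hcard⟩ := card_exp_pow n hn t (2 * Real.pi) hπ le_rfl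
  rw [hβ] at hfin hcard
  rw [argCount_eq_card t n hn _ 1 one_ne_zero (by simp) hfin, hcard]
  congr 1
  rw [div_self (ne_of_gt hπ)]
  ring

lemma argCount_add_one (t : ℝ) (n : ℕ) (hn : 0 < n) :
    argCount t (X ^ n + 1 : ℝ[X]) = ⌊t * n + 1 / 2⌋₊ := by
  have hπ : (0 : ℝ) < 2 * Real.pi := by positivity
  have hβ : Complex.exp (((Real.pi : ℝ) : ℂ) * Complex.I) = -1 := Complex.exp_pi_mul_I
  obtain ⟨hfin, hcard⟩ := card_exp_pow n hn t Real.pi Real.pi_pos (by linarith [Real.pi_pos])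
  rw [hβ] at hfin hcard
  rw [argCount_eq_card t n hn _ (-1) (by norm_num) (by simp [map_neg, sub_neg_eq_add]) hfin,
    hcard]
  congr 1
  rw [show Real.pi / (2 * Real.pi) = 1 / 2 by
    rw [div_eq_div_iff (ne_of_gt hπ) two_ne_zero]; ring]
  ring

lemma argCount_X_pow_mul (t : ℝ) (s : ℕ) (g : ℝ[X]) (hg : g ≠ 0) :
    argCount t (X ^ s * g) = argCount t g := by
  unfold argCount
  have hg' : g.map (algebraMap ℝ ℂ) ≠ 0 :=
    (Polynomial.map_ne_zero_iff (algebraMap ℝ ℂ).injective).2 hg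
  haveI : IsEmpty {l : ℝ // 0 < l ∧ l ≤ 2 * Real.pi * t ∧
      Complex.exp ((l : ℂ) * Complex.I) = 0} := ⟨fun u => Complex.exp_ne_zero _ u.2.2.2⟩
  rw [Polynomial.map_mul, Polynomial.map_pow, map_X,
    roots_mul (mul_ne_zero (pow_ne_zero s X_ne_zero) hg'), roots_pow, roots_X,
    Multiset.nsmul_singleton, Multiset.map_add, Multiset.sum_add, Multiset.map_replicate,
    Multiset.sum_replicate, Nat.card_of_isEmpty, smul_zero, zero_add]

lemma sub_one_ne_zero' (n : ℕ) (hn : 0 < n) : (X ^ n - 1 : ℝ[X]) ≠ 0 := by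
  have := X_pow_sub_C_ne_zero hn (1 : ℝ)
  simpa using this

lemma add_one_ne_zero' (n : ℕ) : (X ^ n + 1 : ℝ[X]) ≠ 0 := by
  intro h
  have : (X ^ n + 1 : ℝ[X]).eval 2 = 0 := by rw [h]; simp
  simp only [eval_add, eval_pow, eval_X, eval_one] at this
  nlinarith [pow_pos (by norm_num : (0:ℝ) < 2) n]

lemma rm0_X_pow_mul (s : ℕ) (g : ℝ[X]) (hg : g ≠ 0) (hg0 : g.eval 0 ≠ 0) :
    rootMultiplicity 0 (X ^ s * g) = s := by
  have hX : (X ^ s : ℝ[X]) ≠ 0 := pow_ne_zero s X_ne_zero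
  rw [rootMultiplicity_mul (mul_ne_zero hX hg)]
  have h1 : rootMultiplicity 0 (X ^ s : ℝ[X]) = s := by
    have := rootMultiplicity_X_sub_C_pow (0 : ℝ) s
    simpa using this
  rw [h1, rootMultiplicity_eq_zero (by simpa [IsRoot] using hg0), add_zero]

lemma rm1_X_pow_mul (s : ℕ) (g : ℝ[X]) (hg : g ≠ 0) :
    rootMultiplicity 1 (X ^ s * g) = rootMultiplicity 1 g := by
  have hX : (X ^ s : ℝ[X]) ≠ 0 := pow_ne_zero s X_ne_zero
  rw [rootMultiplicity_mul (mul_ne_zero hX hg),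
    rootMultiplicity_eq_zero (by simp [IsRoot]), zero_add]

lemma rm1_sub_one (n : ℕ) (hn : 0 < n) : rootMultiplicity 1 (X ^ n - 1 : ℝ[X]) = 1 := by
  have hgeo : (X ^ n - 1 : ℝ[X]) = (∑ i ∈ Finset.range n, X ^ i) * (X - 1) :=
    (geom_sum_mul X n).symm
  rw [hgeo, rootMultiplicity_mul (by rw [← hgeo]; exact sub_one_ne_zero' n hn)]
  have h1 : rootMultiplicity 1 (∑ i ∈ Finset.range n, (X : ℝ[X]) ^ i) = 0 := by
    apply rootMultiplicity_eq_zero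
    simp only [IsRoot, eval_finset_sum, eval_pow, eval_X, one_pow, Finset.sum_const,
      Finset.card_range, nsmul_eq_mul, mul_one]
    exact_mod_cast hn.ne'
  have h2 : rootMultiplicity 1 (X - 1 : ℝ[X]) = 1 := by
    have := rootMultiplicity_X_sub_C_self (x := (1 : ℝ))
    simpa using this
  rw [h1, h2]

lemma rm1_add_one (n : ℕ) : rootMultiplicity 1 (X ^ n + 1 : ℝ[X]) = 0 := by
  apply rootMultiplicity_eq_zero
  simp [IsRoot]

lemma piFn_X_pow_mul_sub (κ d : ℕ) (hd : 0 < d) (s n : ℕ) (hn : 0 < n) :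
    piFn κ d (X ^ s * (X ^ n - 1)) =
      ((2 * s + n : ℕ) : ℚ) * κ / d + ((κ * n / d : ℕ) : ℚ) + 1 / 2 := by
  have hg := sub_one_ne_zero' n hn
  have hd' : (d : ℝ) ≠ 0 := Nat.cast_ne_zero.mpr hd.ne'
  unfold piFn
  rw [rm0_X_pow_mul s _ hg (by simp [zero_pow hn.ne']), rm1_X_pow_mul s _ hg,
    rm1_sub_one n hn, argCount_X_pow_mul _ s _ hg, argCount_sub_one _ n hn]
  have hfl : ⌊(κ : ℝ) / d * n⌋₊ = κ * n / d := by
    rw [show (κ : ℝ) / d * n = ((κ * n : ℕ) : ℝ) / ((d : ℕ) : ℝ) by push_cast; ring,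
      Nat.floor_div_natCast, Nat.floor_natCast]
  rw [hfl]
  have hnat : natDegree (X ^ s * (X ^ n - 1) : ℝ[X]) = s + n := by
    rw [natDegree_mul (pow_ne_zero s X_ne_zero) hg, natDegree_X_pow]
    congr 1
    have : (X ^ n - 1 : ℝ[X]) = X ^ n - C 1 := by simp
    rw [this, natDegree_X_pow_sub_C]
  rw [hnat]
  push_cast
  ring

lemma piFn_X_pow_mul_add (κ d : ℕ) (hd : 0 < d) (s n : ℕ) (hn : 0 < n) :
    piFn κ d (X ^ s * (X ^ n + 1)) =
      ((2 * s + n : ℕ) : ℚ) * κ / d + (((2 * (κ * n) + d) / (2 * d) : ℕ) : ℚ) := by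
  have hg := add_one_ne_zero' n
  have hd' : (d : ℝ) ≠ 0 := Nat.cast_ne_zero.mpr hd.ne'
  unfold piFn
  rw [rm0_X_pow_mul s _ hg (by simp [zero_pow hn.ne']), rm1_X_pow_mul s _ hg,
    rm1_add_one n, argCount_X_pow_mul _ s _ hg, argCount_add_one _ n hn]
  have hfl : ⌊(κ : ℝ) / d * n + 1 / 2⌋₊ = (2 * (κ * n) + d) / (2 * d) := by
    rw [show (κ : ℝ) / d * n + 1 / 2 = ((2 * (κ * n) + d : ℕ) : ℝ) / ((2 * d : ℕ) : ℝ) by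
      push_cast; field_simp,
      Nat.floor_div_natCast, Nat.floor_natCast]
  rw [hfl]
  have hnat : natDegree (X ^ s * (X ^ n + 1) : ℝ[X]) = s + n := by
    rw [natDegree_mul (pow_ne_zero s X_ne_zero) hg, natDegree_X_pow]
    congr 1
    have : (X ^ n + 1 : ℝ[X]) = X ^ n - C (-1) := by simp
    rw [this, natDegree_X_pow_sub_C]
  rw [hnat]
  push_cast
  ring

lemma piFn_neg (κ d : ℕ) (f : ℝ[X]) (hf : f ≠ 0) : piFn κ d (-f) = piFn κ d f := by
  have hC : (-f) = C (-1) * f := by simp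
  have hrm : ∀ x : ℝ, rootMultiplicity x (-f) = rootMultiplicity x f := by
    intro x
    rw [hC, rootMultiplicity_mul (by simpa using hf),
      rootMultiplicity_eq_zero (by simp [IsRoot]), zero_add]
  have hac : argCount ((κ : ℝ) / d) (-f) = argCount ((κ : ℝ) / d) f := by
    unfold argCount
    rw [Polynomial.map_neg, show (-(f.map (algebraMap ℝ ℂ))) = C (-1) * f.map (algebraMap ℝ ℂ)
        by simp,
      roots_C_mul _ (by norm_num)]
  unfold piFn
  rw [hrm 0, hrm 1, hac, natDegree_neg]

/-- Proposition 8.6, first equation: `d` even, `d' = d/2`, and `κ(j−i) = ad + b − d/2` with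
`0 ≤ b < d`.  The difference `π_{κ/d}(q^{i+d'} − q^j) − π_{κ/d}(q^i + q^j)` equals `κ` if
`i − j > 0`, equals `κ − 2a + δ_{b,0}` if `0 < j − i < d'`, and equals `0` if `j − i > d'`. -/
theorem piFn_cohook_sub (κ d : ℕ) (hd : 2 ≤ d) (heven : Even d) (hκ : 1 ≤ κ)
    (hcop : Nat.Coprime κ d) (d' : ℕ) (hd' : 2 * d' = d) (i j : ℕ) (a b : ℤ)
    (hab : (κ : ℤ) * ((j : ℤ) - (i : ℤ)) = a * (d : ℤ) + b - (d' : ℤ))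
    (hb0 : 0 ≤ b) (hbd : b < (d : ℤ)) :
    (0 < (i : ℤ) - (j : ℤ) →
      piFn κ d (X ^ (i + d') - X ^ j) - piFn κ d (X ^ i + X ^ j) = (κ : ℚ)) ∧
    (0 < (j : ℤ) - (i : ℤ) → (j : ℤ) - (i : ℤ) < (d' : ℤ) →
      piFn κ d (X ^ (i + d') - X ^ j) - piFn κ d (X ^ i + X ^ j) =
        if b = 0 then (κ : ℚ) - 2 * (a : ℚ) + 1 else (κ : ℚ) - 2 * (a : ℚ)) ∧
    ((d' : ℤ) < (j : ℤ) - (i : ℤ) →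
      piFn κ d (X ^ (i + d') - X ^ j) - piFn κ d (X ^ i + X ^ j) = 0) := by
  have hd0 : 0 < d := by omega
  have hd'0 : 0 < d' := by omega
  -- κ is odd
  obtain ⟨e, he⟩ : ∃ e, κ = 2 * e + 1 := by
    rcases Nat.even_or_odd κ with hev | hod
    · exfalso
      obtain ⟨c, hc⟩ := hev
      have h2κ : 2 ∣ κ := ⟨c, by omega⟩
      have h2d : 2 ∣ d := heven.two_dvd
      have := Nat.dvd_gcd h2κ h2d
      rw [hcop] at this
      omega
    · obtain ⟨c, hc⟩ := hod
      exact ⟨c, hc⟩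
  have hκz : (κ : ℤ) = 2 * e + 1 := by exact_mod_cast he
  have hdz : (d : ℤ) = 2 * d' := by exact_mod_cast hd'.symm
  have hdz0 : (d : ℤ) ≠ 0 := by omega
  have hκq : (κ : ℚ) = 2 * (e : ℚ) + 1 := by exact_mod_cast he
  have hdq : (d : ℚ) = 2 * (d' : ℚ) := by exact_mod_cast hd'.symm
  have hd'q : (d' : ℚ) ≠ 0 := by
    simp only [ne_eq, Nat.cast_eq_zero]
    omega
  refine ⟨?_, ?_, ?_⟩
  · -- Case 1 : i > j
    intro h1
    have hji : j < i := by omega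
    set p := i - j with hp
    have hp1 : 1 ≤ p := by omega
    have e1 : (X : ℝ[X]) ^ (i + d') - X ^ j = X ^ j * (X ^ (p + d') - 1) := by
      rw [mul_sub, mul_one, ← pow_add, show j + (p + d') = i + d' by omega]
    have e2 : (X : ℝ[X]) ^ i + X ^ j = X ^ j * (X ^ p + 1) := by
      rw [mul_add, mul_one, ← pow_add, show j + p = i by omega]
    rw [e1, e2, piFn_X_pow_mul_sub κ d hd0 j (p + d') (by omega),
      piFn_X_pow_mul_add κ d hd0 j p (by omega)]
    have hA : ((κ * (p + d') / d : ℕ) : ℤ) = ((2 * (κ * p) + d) / (2 * d) : ℕ) + e := by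
      rw [Int.natCast_ediv, Int.natCast_ediv]
      push_cast
      have h1' : (κ : ℤ) * ((p : ℤ) + d') = ((κ : ℤ) * p + d') + (d : ℤ) * e := by
        linear_combination (d' : ℤ) * hκz - (e : ℤ) * hdz
      have h2' : (2 * ((κ : ℤ) * p) + d) = 2 * ((κ : ℤ) * p + d') := by
        linear_combination hdz
      rw [h1', h2', Int.add_mul_ediv_left _ _ hdz0, show ((2 : ℤ) * d) = 2 * d from rfl,
        Int.mul_ediv_mul_of_pos _ _ (by norm_num : (0:ℤ) < 2)]
    have hAq : ((κ * (p + d') / d : ℕ) : ℚ) =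
        (((2 * (κ * p) + d) / (2 * d) : ℕ) : ℚ) + e := by
      have := congrArg (fun z : ℤ => (z : ℚ)) hA
      simp only [Int.cast_add, Int.cast_natCast] at this
      exact this
    rw [hAq]
    push_cast
    rw [hκq, hdq]
    field_simp
    ring
  · -- Case 2 : 0 < j - i < d'
    intro h1 h2
    have hij : i < j := by omega
    set p := j - i with hp
    have hple : p ≤ d' := by omega
    have hp1 : 1 ≤ p := by omega
    have hpd : p < d' := by omega
    set n1 := d' - p with hn1
    have hn1p : 1 ≤ n1 := by omega
    have habp : (κ : ℤ) * (p : ℤ) = a * d + b - d' := by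
      rw [show ((p : ℕ) : ℤ) = (j : ℤ) - i by omega]
      exact hab
    have e1 : (X : ℝ[X]) ^ (i + d') - X ^ j = X ^ j * (X ^ n1 - 1) := by
      rw [mul_sub, mul_one, ← pow_add, show j + n1 = i + d' by omega]
    have e2 : (X : ℝ[X]) ^ i + X ^ j = X ^ i * (X ^ p + 1) := by
      rw [mul_add, mul_one, ← pow_add, show i + p = j by omega, add_comm]
    rw [e1, e2, piFn_X_pow_mul_sub κ d hd0 j n1 (by omega),
      piFn_X_pow_mul_add κ d hd0 i p (by omega)]
    have hA2 : (((2 * (κ * p) + d) / (2 * d) : ℕ) : ℤ) = a := by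
      rw [Int.natCast_ediv]
      push_cast
      have hnum : (2 * ((κ : ℤ) * p) + d) = 2 * b + (2 * d) * a := by
        linear_combination 2 * habp + hdz
      rw [hnum, Int.add_mul_ediv_left _ _ (by omega : (2 * (d : ℤ)) ≠ 0),
        Int.ediv_eq_zero_of_lt (by omega) (by omega), zero_add]
    have hA2q : (((2 * (κ * p) + d) / (2 * d) : ℕ) : ℚ) = (a : ℚ) := by
      rw [← Int.cast_natCast (R := ℚ), hA2]
    have hnumA1 : (κ : ℤ) * ((d' : ℤ) - p) = ((d : ℤ) - b) + (d : ℤ) * ((e : ℤ) - a) := by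
      linear_combination -habp + (d' : ℤ) * hκz - (1 + (e : ℤ)) * hdz
    have hcastn1 : ((κ * n1 : ℕ) : ℤ) = (κ : ℤ) * ((d' : ℤ) - p) := by
      push_cast [hn1, Nat.cast_sub hple]
      ring
    rcases eq_or_ne b 0 with hb | hb
    · rw [if_pos hb]
      have hA1 : ((κ * n1 / d : ℕ) : ℤ) = (e : ℤ) - a + 1 := by
        rw [Int.natCast_ediv, hcastn1, hnumA1, Int.add_mul_ediv_left _ _ hdz0, hb, sub_zero,
          Int.ediv_self hdz0]
        ring
      have hA1q : ((κ * n1 / d : ℕ) : ℚ) = (e : ℚ) - a + 1 := by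
        have := congrArg (fun z : ℤ => (z : ℚ)) hA1
        simp only [Int.cast_add, Int.cast_sub, Int.cast_one, Int.cast_natCast] at this
        exact this
      rw [hA1q, hA2q]
      have hn1q : (n1 : ℚ) = d' - p := by rw [hn1, Nat.cast_sub hple]
      have hpq : (p : ℚ) = j - i := by rw [hp, Nat.cast_sub (by omega : i ≤ j)]
      push_cast [hn1q, hpq, Nat.cast_sub hple, Nat.cast_sub (by omega : i ≤ j)]
      rw [hκq, hdq]
      field_simp
      ring
    · rw [if_neg hb]
      have hA1 : ((κ * n1 / d : ℕ) : ℤ) = (e : ℤ) - a := by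
        rw [Int.natCast_ediv, hcastn1, hnumA1, Int.add_mul_ediv_left _ _ hdz0,
          Int.ediv_eq_zero_of_lt (by omega) (by omega)]
        ring
      have hA1q : ((κ * n1 / d : ℕ) : ℚ) = (e : ℚ) - a := by
        have := congrArg (fun z : ℤ => (z : ℚ)) hA1
        simp only [Int.cast_add, Int.cast_sub, Int.cast_one, Int.cast_natCast] at this
        exact this
      rw [hA1q, hA2q]
      have hn1q : (n1 : ℚ) = d' - p := by rw [hn1, Nat.cast_sub hple]
      have hpq : (p : ℚ) = j - i := by rw [hp, Nat.cast_sub (by omega : i ≤ j)]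
      push_cast [hn1q, hpq, Nat.cast_sub hple, Nat.cast_sub (by omega : i ≤ j)]
      rw [hκq, hdq]
      field_simp
      ring
  · -- Case 3 : j - i > d'
    intro h1
    have hij : i < j := by omega
    set p := j - i with hp
    have hdp : d' < p := by omega
    set n1 := p - d' with hn1
    have hn1p : 1 ≤ n1 := by omega
    have habp : (κ : ℤ) * (p : ℤ) = a * d + b - d' := by
      rw [show ((p : ℕ) : ℤ) = (j : ℤ) - i by omega]
      exact hab
    have e1 : (X : ℝ[X]) ^ (i + d') - X ^ j = -(X ^ (i + d') * (X ^ n1 - 1)) := by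
      rw [mul_sub, mul_one, ← pow_add, neg_sub, show i + d' + n1 = j by omega]
    have e2 : (X : ℝ[X]) ^ i + X ^ j = X ^ i * (X ^ p + 1) := by
      rw [mul_add, mul_one, ← pow_add, show i + p = j by omega, add_comm]
    have hne : (X : ℝ[X]) ^ (i + d') * (X ^ n1 - 1) ≠ 0 :=
      mul_ne_zero (pow_ne_zero _ X_ne_zero) (sub_one_ne_zero' n1 (by omega))
    rw [e1, e2, piFn_neg κ d _ hne, piFn_X_pow_mul_sub κ d hd0 (i + d') n1 (by omega),
      piFn_X_pow_mul_add κ d hd0 i p (by omega)]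
    have hA2 : (((2 * (κ * p) + d) / (2 * d) : ℕ) : ℤ) = a := by
      rw [Int.natCast_ediv]
      push_cast
      have hnum : (2 * ((κ : ℤ) * p) + d) = 2 * b + (2 * d) * a := by
        linear_combination 2 * habp + hdz
      rw [hnum, Int.add_mul_ediv_left _ _ (by omega : (2 * (d : ℤ)) ≠ 0),
        Int.ediv_eq_zero_of_lt (by omega) (by omega), zero_add]
    have hA2q : (((2 * (κ * p) + d) / (2 * d) : ℕ) : ℚ) = (a : ℚ) := by
      rw [← Int.cast_natCast (R := ℚ), hA2]
    have hA1 : ((κ * n1 / d : ℕ) : ℤ) = a - e - 1 := by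
      rw [Int.natCast_ediv]
      have hcastn1 : ((κ * n1 : ℕ) : ℤ) = (κ : ℤ) * ((p : ℤ) - d') := by
        push_cast [hn1, Nat.cast_sub (by omega : d' ≤ p)]
        ring
      have hnumA1 : (κ : ℤ) * ((p : ℤ) - d') = b + (d : ℤ) * (a - e - 1) := by
        linear_combination habp - (d' : ℤ) * hκz + ((e : ℤ) + 1) * hdz
      rw [hcastn1, hnumA1, Int.add_mul_ediv_left _ _ hdz0,
        Int.ediv_eq_zero_of_lt (by omega) (by omega)]
      ring
    have hA1q : ((κ * n1 / d : ℕ) : ℚ) = (a : ℚ) - e - 1 := by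
      have := congrArg (fun z : ℤ => (z : ℚ)) hA1
      simp only [Int.cast_add, Int.cast_sub, Int.cast_one, Int.cast_natCast] at this
      exact this
    rw [hA1q, hA2q]
    have hn1q : (n1 : ℚ) = p - d' := by rw [hn1, Nat.cast_sub (by omega : d' ≤ p)]
    have hpq : (p : ℚ) = j - i := by rw [hp, Nat.cast_sub (by omega : i ≤ j)]
    push_cast [hn1q, hpq, Nat.cast_sub (by omega : d' ≤ p), Nat.cast_sub (by omega : i ≤ j)]
    rw [hκq, hdq]
    field_simp
    ring
end
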